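/- Let g₁,...,g_p ∈ ℝ^p be unit vectors such that for every i = 2,...,p, ‖g_i - Π_{g₁,...,g_{i-1}}(g_i)‖² ≥ η² for some η ∈ (0,1). Then for every i = 1,...,p, ‖g_i - Π_{g_{-i}}(g_i)‖² ≥ η^{2(p-i)} · (η²)^{𝟙{i>1}}, where Π_{g_{-i}} projects onto the span of {g₁,...,g_p} \ {g_i}. In particular, ‖g₁ - Π_{g_{-1}}(g₁)‖² ≥ η^{2(p-1)}. -/

import Mathlib

open Real Submodule

local notation "⟪" x ", " y "⟫" => @inner ℝ _ _ x y

set_option linter.unusedSectionVars false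

variable {E : Type*} [NormedAddCommGroup E] [InnerProductSpace ℝ E] [FiniteDimensional ℝ E]

lemma norm_sub_proj_coef (a b : E) (hb : b ≠ 0) :
    ‖a - (⟪a, b⟫ / ‖b‖ ^ 2) • b‖ ^ 2 = ‖a‖ ^ 2 - ⟪a, b⟫ ^ 2 / ‖b‖ ^ 2 := by
  have hb2 : ‖b‖ ^ 2 ≠ 0 := pow_ne_zero 2 (norm_ne_zero_iff.2 hb)
  rw [norm_sub_sq_real, real_inner_smul_right, norm_smul, mul_pow, Real.norm_eq_abs, sq_abs]
  field_simp
  ring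

lemma proj_sup_formula (T : Submodule ℝ E) (v x : E)
    (hb : v - (orthogonalProjection T v : E) ≠ 0) :
    (x - (orthogonalProjection (T ⊔ Submodule.span ℝ {v}) x : E)) =
      (x - (orthogonalProjection T x : E)) -
      (⟪x - (orthogonalProjection T x : E), v - (orthogonalProjection T v : E)⟫ /
        ‖v - (orthogonalProjection T v : E)‖ ^ 2) • (v - (orthogonalProjection T v : E)) := by
  obtain ⟨a, ha⟩ : ∃ a, a = x - (orthogonalProjection T x : E) := ⟨_, rfl⟩
  obtain ⟨b, hbe⟩ : ∃ b, b = v - (orthogonalProjection T v : E) := ⟨_, rfl⟩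
  rw [← hbe] at hb
  rw [← ha, ← hbe]
  have hb2 : ‖b‖ ^ 2 ≠ 0 := pow_ne_zero 2 (norm_ne_zero_iff.2 hb)
  have haw : ∀ w ∈ T, ⟪a, w⟫ = 0 := by
    intro w hw; rw [ha]; exact starProjection_inner_eq_zero x w hw
  have hbw : ∀ w ∈ T, ⟪b, w⟫ = 0 := by
    intro w hw; rw [hbe]; exact starProjection_inner_eq_zero v w hw
  have hav : ⟪a, v⟫ = ⟪a, b⟫ := by
    have hveq : v = b + (orthogonalProjection T v : E) := by rw [hbe]; abel
    conv_lhs => rw [hveq]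
    rw [inner_add_right, haw _ (orthogonalProjection T v).2, add_zero]
  have hbv : ⟪b, v⟫ = ‖b‖ ^ 2 := by
    have hveq : v = b + (orthogonalProjection T v : E) := by rw [hbe]; abel
    conv_lhs => rw [hveq]
    rw [inner_add_right, hbw _ (orthogonalProjection T v).2, add_zero,
      real_inner_self_eq_norm_sq]
  set t : ℝ := ⟪a, b⟫ / ‖b‖ ^ 2 with ht
  have hbT : b ∈ T ⊔ Submodule.span ℝ {v} := by
    have hv : v ∈ T ⊔ Submodule.span ℝ {v} :=
      le_sup_right (α := Submodule ℝ E) (Submodule.mem_span_singleton_self v)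
    have hPv : (orthogonalProjection T v : E) ∈ T ⊔ Submodule.span ℝ {v} :=
      le_sup_left (α := Submodule ℝ E) (orthogonalProjection T v).2
    rw [hbe]; exact Submodule.sub_mem _ hv hPv
  have hmem : (orthogonalProjection T x : E) + t • b ∈ T ⊔ Submodule.span ℝ {v} :=
    Submodule.add_mem _ (le_sup_left (α := Submodule ℝ E) (orthogonalProjection T x).2)
      (Submodule.smul_mem _ _ hbT)
  have horth : ∀ w ∈ T ⊔ Submodule.span ℝ {v},
      ⟪x - ((orthogonalProjection T x : E) + t • b), w⟫ = 0 := by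
    intro w hw
    rcases Submodule.mem_sup.1 hw with ⟨w₁, hw₁, w₂, hw₂, rfl⟩
    rcases Submodule.mem_span_singleton.1 hw₂ with ⟨c, rfl⟩
    have hx : x - ((orthogonalProjection T x : E) + t • b) = a - t • b := by
      rw [ha]; abel
    have expand : ⟪a - t • b, w₁ + c • v⟫ =
        ⟪a, w₁⟫ - t * ⟪b, w₁⟫ + c * (⟪a, v⟫ - t * ⟪b, v⟫) := by
      rw [inner_add_right, inner_sub_left, inner_sub_left, real_inner_smul_left,
        real_inner_smul_left, real_inner_smul_right, real_inner_smul_right]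
      ring
    rw [hx, expand, haw _ hw₁, hbw _ hw₁, hav, hbv, ht]
    field_simp
    ring
  have hchar : (orthogonalProjection (T ⊔ Submodule.span ℝ {v}) x : E) = _ :=
    eq_starProjection_of_mem_of_inner_eq_zero hmem horth
  rw [hchar, ha]
  abel

lemma resid_norm_sq (T : Submodule ℝ E) (v x : E)
    (hb : v - (orthogonalProjection T v : E) ≠ 0) :
    ‖x - (orthogonalProjection (T ⊔ Submodule.span ℝ {v}) x : E)‖ ^ 2 =
      ‖x - (orthogonalProjection T x : E)‖ ^ 2 -
      ⟪x - (orthogonalProjection T x : E), v - (orthogonalProjection T v : E)⟫ ^ 2 /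
        ‖v - (orthogonalProjection T v : E)‖ ^ 2 := by
  rw [proj_sup_formula T v x hb, norm_sub_proj_coef _ _ hb]

lemma norm_resid_le (T : Submodule ℝ E) (v : E) :
    ‖v - (orthogonalProjection T v : E)‖ ≤ ‖v‖ := by
  have h : ⟪v - (orthogonalProjection T v : E), (orthogonalProjection T v : E)⟫ = 0 :=
    starProjection_inner_eq_zero v _ (orthogonalProjection T v).2
  have hv : v = (v - (orthogonalProjection T v : E)) + (orthogonalProjection T v : E) := by abel
  have hsq : ‖v‖ ^ 2 = ‖v - (orthogonalProjection T v : E)‖ ^ 2 +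
      ‖(orthogonalProjection T v : E)‖ ^ 2 := by
    conv_lhs => rw [hv]
    rw [norm_add_sq_real, h]; ring
  nlinarith [norm_nonneg (v - (orthogonalProjection T v : E)), norm_nonneg v,
    sq_nonneg ‖(orthogonalProjection T v : E)‖]

lemma key_ineq (T : Submodule ℝ E) (x v : E) (hv : ‖v‖ ≤ 1) :
    ‖v - (orthogonalProjection (T ⊔ Submodule.span ℝ {x}) v : E)‖ ^ 2 *
      ‖x - (orthogonalProjection T x : E)‖ ^ 2 ≤
    ‖x - (orthogonalProjection (T ⊔ Submodule.span ℝ {v}) x : E)‖ ^ 2 := by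
  by_cases hb : v - (orthogonalProjection T v : E) = 0
  · have hvT : v ∈ T := by
      have h1 : v = (orthogonalProjection T v : E) := sub_eq_zero.1 hb
      rw [h1]; exact (orthogonalProjection T v).2
    have hvsup : v ∈ T ⊔ Submodule.span ℝ {x} := le_sup_left (α := Submodule ℝ E) hvT
    rw [show (orthogonalProjection (T ⊔ Submodule.span ℝ {x}) v : E) = v from
      starProjection_eq_self_iff.2 hvsup]
    simp [sub_self]
  by_cases ha : x - (orthogonalProjection T x : E) = 0
  · have hxT : x ∈ T := by
      have h1 : x = (orthogonalProjection T x : E) := sub_eq_zero.1 ha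
      rw [h1]; exact (orthogonalProjection T x).2
    have hxsup : x ∈ T ⊔ Submodule.span ℝ {v} := le_sup_left (α := Submodule ℝ E) hxT
    rw [show (orthogonalProjection (T ⊔ Submodule.span ℝ {v}) x : E) = x from
      starProjection_eq_self_iff.2 hxsup, ha]
    simp
  · rw [resid_norm_sq T v x hb, resid_norm_sq T x v ha]
    obtain ⟨a, hae⟩ : ∃ a, a = x - (orthogonalProjection T x : E) := ⟨_, rfl⟩
    obtain ⟨b, hbe⟩ : ∃ b, b = v - (orthogonalProjection T v : E) := ⟨_, rfl⟩
    rw [← hae] at ha ⊢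
    rw [← hbe] at hb ⊢
    have ha2 : (0:ℝ) < ‖a‖ ^ 2 := pow_pos (norm_pos_iff.2 ha) 2
    have hb2 : (0:ℝ) < ‖b‖ ^ 2 := pow_pos (norm_pos_iff.2 hb) 2
    have hcomm : ⟪b, a⟫ = ⟪a, b⟫ := real_inner_comm a b ▸ rfl
    rw [hcomm]
    have hCS : ⟪a, b⟫ ^ 2 ≤ ‖a‖ ^ 2 * ‖b‖ ^ 2 := by
      have h := abs_real_inner_le_norm a b
      nlinarith [abs_nonneg ⟪a, b⟫, sq_abs ⟪a, b⟫, norm_nonneg a, norm_nonneg b]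
    have hble : ‖b‖ ^ 2 ≤ 1 := by
      have h1 := norm_resid_le T v
      rw [← hbe] at h1
      nlinarith [norm_nonneg b]
    have key : (‖b‖ ^ 2 - ⟪a, b⟫ ^ 2 / ‖a‖ ^ 2) * ‖a‖ ^ 2
        = ‖a‖ ^ 2 * ‖b‖ ^ 2 - ⟪a, b⟫ ^ 2 := by field_simp
    rw [key]
    have h2 : ‖a‖ ^ 2 - ⟪a, b⟫ ^ 2 / ‖b‖ ^ 2
        = (‖a‖ ^ 2 * ‖b‖ ^ 2 - ⟪a, b⟫ ^ 2) / ‖b‖ ^ 2 := by field_simp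
    rw [h2, le_div_iff₀ hb2]
    nlinarith

section Aux2
variable {E : Type*} [NormedAddCommGroup E] [InnerProductSpace ℝ E] [FiniteDimensional ℝ E]
lemma resid_congr (K K' : Submodule ℝ E) (h : K = K') (x : E) :
    ‖x - (orthogonalProjection K x : E)‖ = ‖x - (orthogonalProjection K' x : E)‖ := by
  subst h; rfl
end Aux2

/-- if each `gᵢ` has a component of squared norm at least `η²` orthogonal to
the span of the previous vectors, then the leave-one-out residuals satisfy
`‖gᵢ - Π_{g₋ᵢ}(gᵢ)‖² ≥ η^{2(p-1-i)} (η²)^{𝟙{i>0}}` (0-indexed), and in particular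
`‖g₀ - Π_{g₋₀}(g₀)‖² ≥ η^{2(p-1)}`. -/
theorem stmt18 (p : ℕ) (hp : 0 < p) (η : ℝ) (hη0 : 0 < η) (hη1 : η < 1)
    (g : Fin p → EuclideanSpace ℝ (Fin p))
    (hunit : ∀ i, ‖g i‖ = 1)
    (hseq : ∀ i : Fin p, 0 < (i : ℕ) →
      η ^ 2 ≤ ‖g i - (orthogonalProjection
        (Submodule.span ℝ (g '' {j | (j : ℕ) < (i : ℕ)})) (g i) :
          EuclideanSpace ℝ (Fin p))‖ ^ 2) :
    (∀ i : Fin p,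
      η ^ (2 * (p - 1 - (i : ℕ))) * (η ^ 2) ^ (if (i : ℕ) = 0 then 0 else 1) ≤
        ‖g i - (orthogonalProjection
          (Submodule.span ℝ (g '' {j | j ≠ i})) (g i) :
            EuclideanSpace ℝ (Fin p))‖ ^ 2) ∧
    η ^ (2 * (p - 1)) ≤
      ‖g ⟨0, hp⟩ - (orthogonalProjection
        (Submodule.span ℝ (g '' {j | j ≠ ⟨0, hp⟩})) (g ⟨0, hp⟩) :
          EuclideanSpace ℝ (Fin p))‖ ^ 2 := by
  have main : ∀ i : Fin p,
      η ^ (2 * (p - 1 - (i : ℕ))) * (η ^ 2) ^ (if (i : ℕ) = 0 then 0 else 1) ≤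
        ‖g i - (orthogonalProjection (Submodule.span ℝ (g '' {j | j ≠ i})) (g i) :
          EuclideanSpace ℝ (Fin p))‖ ^ 2 := by
    intro i
    set B : ℝ := (η ^ 2) ^ (if (i : ℕ) = 0 then 0 else 1) with hB
    have hBpos : 0 < B := by positivity
    have claim : ∀ k : ℕ, (i : ℕ) + 1 ≤ k → k ≤ p →
        η ^ (2 * (k - 1 - (i : ℕ))) * B ≤
          ‖g i - (orthogonalProjection
            (Submodule.span ℝ (g '' {j | (j : ℕ) < k ∧ j ≠ i})) (g i) :
              EuclideanSpace ℝ (Fin p))‖ ^ 2 := by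
      refine Nat.le_induction ?_ ?_
      · -- base : k = i + 1
        intro _
        have hsub : (i : ℕ) + 1 - 1 - (i : ℕ) = 0 := by omega
        rw [hsub, mul_zero, pow_zero, one_mul]
        have hset0 : {j : Fin p | (j : ℕ) < (i : ℕ) + 1 ∧ j ≠ i} =
            {j : Fin p | (j : ℕ) < (i : ℕ)} := by
          ext j; simp only [Set.mem_setOf_eq, ne_eq, Fin.ext_iff]; omega
        have hSe : Submodule.span ℝ (g '' {j : Fin p | (j : ℕ) < (i : ℕ) + 1 ∧ j ≠ i}) =
            Submodule.span ℝ (g '' {j : Fin p | (j : ℕ) < (i : ℕ)}) := by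
          rw [hset0]
        rw [resid_congr _ _ hSe (g i)]
        by_cases hi0 : (i : ℕ) = 0
        · have hempty : Submodule.span ℝ (g '' {j : Fin p | (j : ℕ) < (i : ℕ)}) =
              (⊥ : Submodule ℝ (EuclideanSpace ℝ (Fin p))) := by
            have : {j : Fin p | (j : ℕ) < (i : ℕ)} = ∅ := by ext j; simp [hi0]
            rw [this, Set.image_empty, Submodule.span_empty]
          rw [resid_congr _ _ hempty (g i)]
          rw [hB]
          simp [hi0, orthogonalProjection_bot, hunit i]
        · have := hseq i (Nat.pos_of_ne_zero hi0)
          rw [hB]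
          simpa [hi0] using this
      · -- step
        intro k hk ih hk1
        have hkp : k < p := hk1
        have hkpos : 0 < k := by omega
        have prev := ih (le_of_lt hkp)
        have e1 : Submodule.span ℝ (g '' {j : Fin p | (j : ℕ) < k + 1 ∧ j ≠ i}) =
            Submodule.span ℝ (g '' {j : Fin p | (j : ℕ) < k ∧ j ≠ i}) ⊔
              Submodule.span ℝ {g ⟨k, hkp⟩} := by
          have hset : {j : Fin p | (j : ℕ) < k + 1 ∧ j ≠ i} =
              {j : Fin p | (j : ℕ) < k ∧ j ≠ i} ∪ {(⟨k, hkp⟩ : Fin p)} := by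
            ext j
            simp only [Set.mem_setOf_eq, Set.mem_union, Set.mem_singleton_iff, ne_eq,
              Fin.ext_iff]
            omega
          rw [hset, Set.image_union, Set.image_singleton, Submodule.span_union]
        have e2 : Submodule.span ℝ (g '' {j : Fin p | (j : ℕ) < k ∧ j ≠ i}) ⊔
              Submodule.span ℝ {g i} =
            Submodule.span ℝ (g '' {j : Fin p | (j : ℕ) < k}) := by
          have hset : {j : Fin p | (j : ℕ) < k ∧ j ≠ i} ∪ {i} =
              {j : Fin p | (j : ℕ) < k} := by
            ext j
            simp only [Set.mem_setOf_eq, Set.mem_union, Set.mem_singleton_iff, ne_eq,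
              Fin.ext_iff]
            omega
          rw [← hset, Set.image_union, Set.image_singleton, Submodule.span_union]
        have hkey := key_ineq (Submodule.span ℝ (g '' {j : Fin p | (j : ℕ) < k ∧ j ≠ i}))
          (g i) (g ⟨k, hkp⟩) (le_of_eq (hunit _))
        rw [resid_congr _ _ e2 (g ⟨k, hkp⟩), ← resid_congr _ _ e1 (g i)] at hkey
        have hc := hseq ⟨k, hkp⟩ hkpos
        have hexp : 2 * (k + 1 - 1 - (i : ℕ)) = 2 + 2 * (k - 1 - (i : ℕ)) := by omega
        rw [hexp, pow_add, mul_assoc]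
        calc η ^ 2 * (η ^ (2 * (k - 1 - (i : ℕ))) * B)
            ≤ ‖g ⟨k, hkp⟩ - (orthogonalProjection
                (Submodule.span ℝ (g '' {j : Fin p | (j : ℕ) < k})) (g ⟨k, hkp⟩) :
                  EuclideanSpace ℝ (Fin p))‖ ^ 2 *
              ‖g i - (orthogonalProjection
                (Submodule.span ℝ (g '' {j : Fin p | (j : ℕ) < k ∧ j ≠ i})) (g i) :
                  EuclideanSpace ℝ (Fin p))‖ ^ 2 := by
              apply mul_le_mul hc prev (by positivity) (by positivity)
          _ ≤ _ := hkey
    have hfin : (i : ℕ) + 1 ≤ p := i.isLt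
    have hcl := claim p hfin le_rfl
    have hsetp : {j : Fin p | (j : ℕ) < p ∧ j ≠ i} = {j : Fin p | j ≠ i} := by
      ext j; simp [j.isLt]
    have hSe : Submodule.span ℝ (g '' {j : Fin p | (j : ℕ) < p ∧ j ≠ i}) =
        Submodule.span ℝ (g '' {j : Fin p | j ≠ i}) := by
      rw [hsetp]
    rw [resid_congr _ _ hSe (g i)] at hcl
    exact hcl
  refine ⟨main, ?_⟩
  have h0 := main ⟨0, hp⟩
  simpa using h0
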